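/- Let Γ be a divisible linearly ordered abelian group and A ⊆ Γ a nonempty, downward closed, proper subset of Γ (a one-sided description of a ranger). Then there exists a linear order on the abelian group Γ × ℤ making it a linearly ordered abelian group such that the embedding γ ↦ (γ, 0) is an order embedding of Γ, and such that the element t = (0, 1) realizes A: for all γ ∈ Γ, γ ∈ A if and only if (γ, 0) < t. -/

import Mathlib

section AuxStmt11

variable {Γ : Type*} [AddCommGroup Γ] [LinearOrder Γ] [IsOrderedAddMonoid Γ]

private lemma nsmul_le_iff' {n : ℕ} (hn : 0 < n) {y z : Γ} : n • y ≤ n • z ↔ y ≤ z := by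
  constructor
  · intro h
    by_contra hlt
    push_neg at hlt
    have h0 : (0:Γ) < n • (y - z) := nsmul_pos (sub_pos.mpr hlt) hn.ne'
    rw [smul_sub, sub_pos] at h0
    exact absurd h (not_le.mpr h0)
  · intro h
    have h0 : (0:Γ) ≤ n • (z - y) := nsmul_nonneg (sub_nonneg.mpr h) n
    rwa [smul_sub, sub_nonneg] at h0

private lemma nsmul_lt_iff' {n : ℕ} (hn : 0 < n) {y z : Γ} : n • y < n • z ↔ y < z := by
  rw [← not_le, ← not_le, nsmul_le_iff' hn]

private lemma nsmul_inj' {n : ℕ} (hn : 0 < n) {y z : Γ} (h : n • y = n • z) : y = z :=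
  le_antisymm ((nsmul_le_iff' hn).1 h.le) ((nsmul_le_iff' hn).1 h.ge)

/-- Positivity predicate on `Γ × ℤ` encoding `δ + m • t > 0` where `t` is the cut `A`. -/
private def PosCut (A : Set Γ) : Γ × ℤ → Prop := fun x =>
  (x.2 = 0 ∧ 0 < x.1) ∨
  (0 < x.2 ∧ ∃ y : Γ, x.2.toNat • y = x.1 ∧ -y ∈ A) ∨
  (x.2 < 0 ∧ ∃ y : Γ, (-x.2).toNat • y = x.1 ∧ y ∉ A)

variable (A : Set Γ)

private lemma posCut_notBoth {x : Γ × ℤ} (hx : PosCut A x) (hx' : PosCut A (-x)) : False := by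
  obtain ⟨δ, m⟩ := x
  simp only [PosCut, Prod.neg_mk, neg_neg] at hx hx'
  rcases hx with ⟨hm, hδ⟩ | ⟨hm, y, hy, hyA⟩ | ⟨hm, y, hy, hyA⟩ <;>
    rcases hx' with ⟨hm', hδ'⟩ | ⟨hm', y', hy', hy'A⟩ | ⟨hm', y', hy', hy'A⟩ <;>
      try omega
  · exact lt_asymm hδ (neg_pos.mp hδ')
  · -- 0 < m and -m < 0 : matching case
    have : m.toNat • y' = m.toNat • (-y) := by rw [smul_neg, hy, hy']
    have hy'e : y' = -y := nsmul_inj' (by omega) this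
    exact hy'A (hy'e ▸ hyA)
  · -- m < 0 and 0 < -m
    have : (-m).toNat • y' = (-m).toNat • (-y) := by rw [smul_neg, hy, hy']
    have hy'e : y' = -y := nsmul_inj' (by omega) this
    rw [hy'e, neg_neg] at hy'A
    exact hyA hy'A

private lemma posCut_tri (hdiv : ∀ (x : Γ) (n : ℕ), 0 < n → ∃ y : Γ, n • y = x)
    {x : Γ × ℤ} (hx : x ≠ 0) : PosCut A x ∨ PosCut A (-x) := by
  obtain ⟨δ, m⟩ := x
  simp only [PosCut, Prod.neg_mk, neg_neg]
  rcases lt_trichotomy m 0 with hm | hm | hm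
  · obtain ⟨y, hy⟩ := hdiv δ (-m).toNat (by omega)
    by_cases hyA : y ∈ A
    · right; right; left
      refine ⟨by omega, -y, ?_, ?_⟩
      · rw [smul_neg, hy]
      · rwa [neg_neg]
    · left; right; right; exact ⟨hm, y, hy, hyA⟩
  · subst hm
    have hδ : δ ≠ 0 := by
      intro h; exact hx (by simp [h, Prod.ext_iff])
    rcases lt_trichotomy δ 0 with h | h | h
    · right; left; exact ⟨rfl, by simpa using h⟩
    · exact absurd h hδ
    · left; left; exact ⟨rfl, h⟩
  · obtain ⟨y, hy⟩ := hdiv δ m.toNat (by omega)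
    by_cases hyA : -y ∈ A
    · left; right; left; exact ⟨hm, y, hy, hyA⟩
    · right; right; right
      refine ⟨by omega, -y, ?_, hyA⟩
      rw [smul_neg, hy]

/-- mixed case: first component has zero slope, second positive slope. -/
private lemma posCut_aux1 (hdiv : ∀ (x : Γ) (n : ℕ), 0 < n → ∃ y : Γ, n • y = x)
    (hdc : ∀ a ∈ A, ∀ b : Γ, b ≤ a → b ∈ A) {δ δ' : Γ} {m' : ℤ} (hδ : 0 < δ) (hm' : 0 < m')
    (hb : ∃ y : Γ, m'.toNat • y = δ' ∧ -y ∈ A) :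
    ∃ y : Γ, m'.toNat • y = δ + δ' ∧ -y ∈ A := by
  obtain ⟨y', hy', hy'A⟩ := hb
  have hn' : 0 < m'.toNat := by omega
  obtain ⟨z, hz⟩ := hdiv δ m'.toNat hn'
  have hzpos : 0 < z := by
    have h := (nsmul_lt_iff' hn' (y := (0:Γ)) (z := z))
    rw [smul_zero, hz] at h
    exact h.1 hδ
  refine ⟨y' + z, ?_, ?_⟩
  · rw [smul_add, hy', hz]; abel
  · have h1 : -(y' + z) ≤ -y' := by
      rw [neg_add]
      exact add_le_of_nonpos_right (neg_nonpos.mpr hzpos.le)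
    exact hdc (-y') hy'A _ h1

/-- mixed case: first component zero slope, second negative slope. -/
private lemma posCut_aux2 (hdiv : ∀ (x : Γ) (n : ℕ), 0 < n → ∃ y : Γ, n • y = x)
    (hdc : ∀ a ∈ A, ∀ b : Γ, b ≤ a → b ∈ A) {δ δ' : Γ} {m' : ℤ} (hδ : 0 < δ) (hm' : m' < 0)
    (hb : ∃ y : Γ, (-m').toNat • y = δ' ∧ y ∉ A) :
    ∃ y : Γ, (-m').toNat • y = δ + δ' ∧ y ∉ A := by
  obtain ⟨y', hy', hy'A⟩ := hb
  have hn' : 0 < (-m').toNat := by omega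
  obtain ⟨z, hz⟩ := hdiv δ (-m').toNat hn'
  have hzpos : 0 < z := by
    have h := (nsmul_lt_iff' hn' (y := (0:Γ)) (z := z))
    rw [smul_zero, hz] at h
    exact h.1 hδ
  refine ⟨y' + z, ?_, ?_⟩
  · rw [smul_add, hy', hz]; abel
  · intro hmem
    have h1 : y' ≤ y' + z := le_add_of_nonneg_right hzpos.le
    exact hy'A (hdc _ hmem y' h1)

/-- mixed case: negative slope plus positive slope. -/
private lemma posCut_aux3 (hdiv : ∀ (x : Γ) (n : ℕ), 0 < n → ∃ y : Γ, n • y = x)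
    (hdc : ∀ a ∈ A, ∀ b : Γ, b ≤ a → b ∈ A) {δ δ' : Γ} {m m' : ℤ} (hm : m < 0) (hm' : 0 < m')
    (ha : ∃ y : Γ, (-m).toNat • y = δ ∧ y ∉ A)
    (hb : ∃ y : Γ, m'.toNat • y = δ' ∧ -y ∈ A) :
    PosCut A (δ + δ', m + m') := by
  obtain ⟨y, hy, hyA⟩ := ha
  obtain ⟨y', hy', hy'A⟩ := hb
  set n := (-m).toNat with hn
  set n' := m'.toNat with hn'
  have hnpos : 0 < n := by omega
  have hn'pos : 0 < n' := by omega
  have hyy' : 0 < y + y' := by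
    by_contra h
    push_neg at h
    have h2 : y - -y' ≤ 0 := by rwa [sub_neg_eq_add]
    exact hyA (hdc (-y') hy'A y (sub_nonpos.mp h2))
  rcases lt_trichotomy (m + m') 0 with hs | hs | hs
  · -- resulting slope negative
    right; right
    refine ⟨hs, ?_⟩
    set N := (-(m + m')).toNat with hN
    have hNpos : 0 < N := by omega
    have hNn : N + n' = n := by omega
    obtain ⟨w, hw⟩ := hdiv (δ + δ') N hNpos
    have hsplit : n • y = N • y + n' • y := by rw [← hNn, add_nsmul]
    have key : N • w - N • y = n' • (y + y') := by
      rw [hw, ← hy, ← hy', hsplit, smul_add]; abel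
    have hlt : N • y < N • w := by
      have hp : (0:Γ) < n' • (y + y') := nsmul_pos hyy' hn'pos.ne'
      rw [← key] at hp
      exact sub_pos.mp hp
    have hyw : y < w := (nsmul_lt_iff' hNpos).1 hlt
    exact ⟨w, hw, fun hwA => hyA (hdc w hwA y hyw.le)⟩
  · -- resulting slope zero
    left
    refine ⟨hs, ?_⟩
    have hnn' : n = n' := by omega
    have : δ + δ' = n • (y + y') := by
      rw [smul_add, hy, hnn', hy']
    rw [this]
    exact nsmul_pos hyy' hnpos.ne'
  · -- resulting slope positive
    right; left
    refine ⟨hs, ?_⟩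
    set N := (m + m').toNat with hN
    have hNpos : 0 < N := by omega
    have hNn : N + n = n' := by omega
    obtain ⟨w, hw⟩ := hdiv (δ + δ') N hNpos
    have hsplit : n' • y' = N • y' + n • y' := by rw [← hNn, add_nsmul]
    have key : N • w - N • y' = n • (y + y') := by
      rw [hw, ← hy, ← hy', hsplit, smul_add]; abel
    have hlt : N • y' < N • w := by
      have hp : (0:Γ) < n • (y + y') := nsmul_pos hyy' hnpos.ne'
      rw [← key] at hp
      exact sub_pos.mp hp
    have hyw : y' < w := (nsmul_lt_iff' hNpos).1 hlt
    exact ⟨w, hw, hdc (-y') hy'A (-w) (neg_le_neg hyw.le)⟩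

private lemma posCut_add (hdiv : ∀ (x : Γ) (n : ℕ), 0 < n → ∃ y : Γ, n • y = x)
    (hdc : ∀ a ∈ A, ∀ b : Γ, b ≤ a → b ∈ A) {a b : Γ × ℤ} (ha : PosCut A a) (hb : PosCut A b) :
    PosCut A (a + b) := by
  obtain ⟨δ, m⟩ := a
  obtain ⟨δ', m'⟩ := b
  simp only [PosCut, Prod.mk_add_mk] at ha hb ⊢
  rcases ha with ⟨hm, hδ⟩ | ⟨hm, hy⟩ | ⟨hm, hy⟩ <;>
    rcases hb with ⟨hm', hδ'⟩ | ⟨hm', hy'⟩ | ⟨hm', hy'⟩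
  · -- (0,0)
    left; exact ⟨by omega, add_pos hδ hδ'⟩
  · -- (0,+)
    right; left
    refine ⟨by omega, ?_⟩
    have he : (m + m').toNat = m'.toNat := by omega
    rw [he]
    exact posCut_aux1 A hdiv hdc hδ hm' hy'
  · -- (0,-)
    right; right
    refine ⟨by omega, ?_⟩
    have he : (-(m + m')).toNat = (-m').toNat := by omega
    rw [he]
    exact posCut_aux2 A hdiv hdc hδ hm' hy'
  · -- (+,0)
    right; left
    refine ⟨by omega, ?_⟩
    have he : (m + m').toNat = m.toNat := by omega
    rw [he, add_comm δ δ']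
    exact posCut_aux1 A hdiv hdc hδ' hm hy
  · -- (+,+)
    right; left
    refine ⟨by omega, ?_⟩
    obtain ⟨y, hy, hyA⟩ := hy
    obtain ⟨y', hy', hy'A⟩ := hy'
    set n := m.toNat
    set n' := m'.toNat
    set N := (m + m').toNat with hN
    have hNpos : 0 < N := by omega
    have hNnn' : N = n + n' := by omega
    obtain ⟨w, hw⟩ := hdiv (δ + δ') N hNpos
    set M := max (-y) (-y') with hM
    have hMA : M ∈ A := by
      rcases max_cases (-y) (-y') with ⟨he, _⟩ | ⟨he, _⟩ <;> rw [hM, he] <;> assumption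
    have hle : N • (-w) ≤ N • M := by
      have h1 : N • (-w) = n • (-y) + n' • (-y') := by
        rw [smul_neg, hw, ← hy, ← hy', smul_neg, smul_neg]; abel
      have h2 : N • M = n • M + n' • M := by rw [hNnn', add_nsmul]
      rw [h1, h2]
      exact add_le_add ((nsmul_le_iff' (by omega)).2 (le_max_left _ _))
        ((nsmul_le_iff' (by omega)).2 (le_max_right _ _))
    have hwM : -w ≤ M := (nsmul_le_iff' hNpos).1 hle
    exact ⟨w, hw, hdc M hMA (-w) hwM⟩
  · -- (+,-)
    rw [add_comm δ δ', add_comm m m']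
    exact posCut_aux3 A hdiv hdc hm' hm hy' hy
  · -- (-,0)
    right; right
    refine ⟨by omega, ?_⟩
    have he : (-(m + m')).toNat = (-m).toNat := by omega
    rw [he, add_comm δ δ']
    exact posCut_aux2 A hdiv hdc hδ' hm hy
  · -- (-,+)
    exact posCut_aux3 A hdiv hdc hm hm' hy hy'
  · -- (-,-)
    right; right
    refine ⟨by omega, ?_⟩
    obtain ⟨y, hy, hyA⟩ := hy
    obtain ⟨y', hy', hy'A⟩ := hy'
    set n := (-m).toNat
    set n' := (-m').toNat
    set N := (-(m + m')).toNat with hN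
    have hNpos : 0 < N := by omega
    have hNnn' : N = n + n' := by omega
    obtain ⟨w, hw⟩ := hdiv (δ + δ') N hNpos
    set M := min y y' with hM
    have hMA : M ∉ A := by
      rcases min_cases y y' with ⟨he, _⟩ | ⟨he, _⟩ <;> rw [hM, he] <;> assumption
    have hle : N • M ≤ N • w := by
      have h1 : N • w = n • y + n' • y' := by rw [hw, ← hy, ← hy']
      have h2 : N • M = n • M + n' • M := by rw [hNnn', add_nsmul]
      rw [h1, h2]
      exact add_le_add ((nsmul_le_iff' (by omega)).2 (min_le_left _ _))
        ((nsmul_le_iff' (by omega)).2 (min_le_right _ _))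
    have hMw : M ≤ w := (nsmul_le_iff' hNpos).1 hle
    exact ⟨w, hw, fun hwA => hMA (hdc w hwA M hMw)⟩

end AuxStmt11

/-- Any nonempty, downward closed, proper subset `A` of a divisible linearly ordered
abelian group `Γ` is realized by an element `t = (0,1)` of `Γ × ℤ` for a suitable
linear group order on `Γ × ℤ` extending that of `Γ`. -/
theorem stmt_11 {Γ : Type*} [AddCommGroup Γ] [LinearOrder Γ] [IsOrderedAddMonoid Γ]
    (hdiv : ∀ (x : Γ) (n : ℕ), 0 < n → ∃ y : Γ, n • y = x)
    (A : Set Γ) (hne : A.Nonempty) (hdc : ∀ a ∈ A, ∀ b : Γ, b ≤ a → b ∈ A)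
    (hproper : A ≠ Set.univ) :
    ∃ r : Γ × ℤ → Γ × ℤ → Prop,
      IsLinearOrder (Γ × ℤ) r ∧
      (∀ a b c : Γ × ℤ, r a b → r (a + c) (b + c)) ∧
      (∀ γ γ' : Γ, γ ≤ γ' ↔ r (γ, 0) (γ', 0)) ∧
      (∀ γ : Γ, γ ∈ A ↔ (r (γ, 0) ((0 : Γ), (1 : ℤ)) ∧ (γ, (0 : ℤ)) ≠ ((0 : Γ), (1 : ℤ)))) := by
  refine ⟨fun x y => x = y ∨ PosCut A (y - x), ?_, ?_, ?_, ?_⟩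
  · refine { refl := fun a => Or.inl rfl, trans := ?_, antisymm := ?_, total := ?_ }
    · rintro a b c (rfl | hab) hbc
      · exact hbc
      · rcases hbc with rfl | hbc
        · exact Or.inr hab
        · right
          have := posCut_add A hdiv hdc hbc hab
          rwa [sub_add_sub_cancel] at this
    · rintro a b (rfl | hab) hba
      · rfl
      · rcases hba with rfl | hba
        · rfl
        · exfalso
          have : PosCut A (-(b - a)) := by rwa [neg_sub]
          exact posCut_notBoth A hab this
    · intro a b
      rcases eq_or_ne a b with rfl | h
      · exact Or.inl (Or.inl rfl)
      · have hne0 : b - a ≠ 0 := sub_ne_zero.mpr (Ne.symm h)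
        rcases posCut_tri A hdiv hne0 with hp | hp
        · exact Or.inl (Or.inr hp)
        · right; right; rwa [neg_sub] at hp
  · rintro a b c (rfl | hab)
    · exact Or.inl rfl
    · right
      rwa [add_sub_add_right_eq_sub]
  · intro γ γ'
    constructor
    · intro h
      rcases eq_or_lt_of_le h with rfl | h
      · exact Or.inl rfl
      · right
        have he : ((γ', (0:ℤ)) : Γ × ℤ) - (γ, 0) = (γ' - γ, 0) := by
          simp [Prod.mk_sub_mk]
        rw [he]
        exact Or.inl ⟨rfl, sub_pos.mpr h⟩
    · rintro (heq | hp)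
      · injection heq with h1 h2
        exact h1.le
      · have he : ((γ', (0:ℤ)) : Γ × ℤ) - (γ, 0) = (γ' - γ, 0) := by
          simp [Prod.mk_sub_mk]
        rw [he] at hp
        rcases hp with ⟨_, h⟩ | ⟨h, _⟩ | ⟨h, _⟩
        · exact (sub_pos.mp h).le
        · exact absurd h (by norm_num)
        · exact absurd h (by norm_num)
  · intro γ
    have he : (((0:Γ), (1:ℤ)) : Γ × ℤ) - (γ, 0) = (-γ, 1) := by
      simp [Prod.mk_sub_mk]
    constructor
    · intro hγA
      refine ⟨Or.inr ?_, ?_⟩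
      · rw [he]
        right; left
        exact ⟨one_pos, -γ, by simp, by simpa using hγA⟩
      · intro hcon
        simp [Prod.ext_iff] at hcon
    · rintro ⟨(heq | hp), hne2⟩
      · exact absurd heq hne2
      · rw [he] at hp
        rcases hp with ⟨h, _⟩ | ⟨_, y, hy, hyA⟩ | ⟨h, _⟩
        · exact absurd h (by norm_num)
        · have : y = -γ := by simpa using hy
          rw [this, neg_neg] at hyA
          exact hyA
        · exact absurd h (by norm_num)
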